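/- Let p be an odd prime and G a finite group such that g^p = 1 for all g ∈ G and [G,G] = Z(G) with 1 < Z(G) < G. Let Bi(G) : G/Z(G) × G/Z(G) → [G,G] be the commutator bimap, an alternating 𝔽_p-bilinear map of 𝔽_p-vector spaces (G/Z(G) and [G,G] are elementary abelian p-groups). Then G is isomorphic to the Baer group Grp(Bi(G)). -/

import Mathlib

set_option linter.unusedSectionVars false

section Baer

variable {p : ℕ} [Fact p.Prime] {V W : Type*}
  [AddCommGroup V] [AddCommGroup W] [Module (ZMod p) V] [Module (ZMod p) W]

/-- The Baer group `Grp(b)` of an alternating `𝔽_p`-bilinear map `b : V × V → W` (for `p` odd):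
the set `V × W` endowed with the product `(u,s)·(v,t) = (u+v, s+t+2⁻¹·b(u,v))`. -/
def BaerGroup (b : V →ₗ[ZMod p] V →ₗ[ZMod p] W) : Type _ := V × W

namespace BaerGroup

variable (b : V →ₗ[ZMod p] V →ₗ[ZMod p] W)

instance : Mul (BaerGroup b) :=
  ⟨fun x y => ((x.1 + y.1 : V), (x.2 + y.2 + (2⁻¹ : ZMod p) • (b x.1 y.1) : W))⟩

instance : One (BaerGroup b) := ⟨((0 : V), (0 : W))⟩

instance : Inv (BaerGroup b) :=
  ⟨fun x => ((-x.1 : V), (-x.2 + (2⁻¹ : ZMod p) • (b x.1 x.1) : W))⟩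

variable {b}

@[simp] lemma mul_fst (x y : BaerGroup b) : (x * y).1 = x.1 + y.1 := rfl
@[simp] lemma mul_snd (x y : BaerGroup b) :
    (x * y).2 = x.2 + y.2 + (2⁻¹ : ZMod p) • (b x.1 y.1) := rfl
@[simp] lemma one_fst : (1 : BaerGroup b).1 = 0 := rfl
@[simp] lemma one_snd : (1 : BaerGroup b).2 = 0 := rfl
@[simp] lemma inv_fst (x : BaerGroup b) : (x⁻¹).1 = -x.1 := rfl
@[simp] lemma inv_snd (x : BaerGroup b) :
    (x⁻¹).2 = -x.2 + (2⁻¹ : ZMod p) • (b x.1 x.1) := rfl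

lemma prodext {x y : BaerGroup b} (h1 : x.1 = y.1) (h2 : x.2 = y.2) : x = y :=
  Prod.ext h1 h2

instance instGroup : Group (BaerGroup b) where
  mul_assoc x y z := by
    refine prodext ?_ ?_
    · simp [add_assoc]
    · simp [map_add, LinearMap.add_apply, smul_add]
      abel
  one_mul x := by
    refine prodext ?_ ?_ <;> simp
  mul_one x := by
    refine prodext ?_ ?_ <;> simp
  inv_mul_cancel x := by
    refine prodext ?_ ?_
    · simp
    · simp [map_neg, LinearMap.neg_apply]

end BaerGroup

end Baer

open scoped commutatorElement

section BaerAux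

variable {G : Type} [Group G]

private lemma central_commute {z : G} (hz : z ∈ Subgroup.center G) (g : G) :
    Commute g z := Subgroup.mem_center_iff.mp hz g

private lemma comm_central_right {z : G} (hz : z ∈ Subgroup.center G) (c : G) :
    ⁅c, z⁆ = 1 :=
  commutatorElement_eq_one_iff_commute.mpr (central_commute hz c)

private lemma comm_central_left {z : G} (hz : z ∈ Subgroup.center G) (c : G) :
    ⁅z, c⁆ = 1 :=
  commutatorElement_eq_one_iff_commute.mpr (central_commute hz c).symm

private lemma central_left_comm {z : G} (hz : z ∈ Subgroup.center G) (g y : G) :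
    z * (g * y) = g * (z * y) := by
  rw [← mul_assoc, ← (central_commute hz g).eq, mul_assoc]

/-- The Baer addition `a + b = a * b * ⁅b,a⁆^m` makes a class-2 group of odd exponent
`p = 2m-1` into an abelian group. -/
def baerAddCommGroup (m : ℕ)
    (hC : ∀ a b : G, ⁅a, b⁆ ∈ Subgroup.center G)
    (hL : ∀ a b k : G, ⁅a * b, k⁆ = ⁅a, k⁆ * ⁅b, k⁆)
    (hR : ∀ k a b : G, ⁅k, a * b⁆ = ⁅k, a⁆ * ⁅k, b⁆)
    (hp1 : ∀ a b : G, ⁅a, b⁆ ^ (2 * m) = ⁅a, b⁆) :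
    AddCommGroup G where
  add a b := a * b * ⁅b, a⁆ ^ m
  zero := 1
  neg a := a⁻¹
  nsmul n a := a ^ n
  zsmul n a := a ^ n
  nsmul_zero a := pow_zero a
  nsmul_succ n a := by
    show a ^ (n + 1) = a ^ n * a * ⁅a, a ^ n⁆ ^ m
    have h1 : ⁅a, a ^ n⁆ = 1 :=
      commutatorElement_eq_one_iff_commute.mpr ((Commute.refl a).pow_right n)
    rw [h1, one_pow, mul_one, pow_succ]
  zsmul_zero' a := zpow_zero a
  zsmul_succ' n a := by
    show a ^ (Int.ofNat n.succ) = a ^ (Int.ofNat n) * a * ⁅a, a ^ (Int.ofNat n)⁆ ^ m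
    have h1 : ⁅a, a ^ (Int.ofNat n)⁆ = 1 :=
      commutatorElement_eq_one_iff_commute.mpr ((Commute.refl a).zpow_right _)
    rw [h1, one_pow, mul_one]
    simp only [Int.ofNat_eq_coe, zpow_natCast, pow_succ]
  zsmul_neg' n a := by
    show a ^ (Int.negSucc n) = (a ^ ((n.succ : ℕ) : ℤ))⁻¹
    rw [zpow_negSucc, zpow_natCast]
  add_assoc a b c := by
    show a * b * ⁅b, a⁆ ^ m * c * ⁅c, a * b * ⁅b, a⁆ ^ m⁆ ^ m
        = a * (b * c * ⁅c, b⁆ ^ m) * ⁅b * c * ⁅c, b⁆ ^ m, a⁆ ^ m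
    have hCp : ∀ a b : G, ∀ n : ℕ, ⁅a, b⁆ ^ n ∈ Subgroup.center G :=
      fun a b n => pow_mem (hC a b) n
    rw [hR c (a * b) (⁅b, a⁆ ^ m), comm_central_right (hCp b a m) c, mul_one,
        hR c a b, hL (b * c) (⁅c, b⁆ ^ m) a, comm_central_left (hCp c b m) a, mul_one,
        hL b c a,
        (central_commute (hC c b) ⁅c, a⁆).mul_pow,
        (central_commute (hC c a) ⁅b, a⁆).mul_pow]
    simp only [mul_assoc]
    rw [central_left_comm (hCp b a m) c]
    rw [central_left_comm (hCp c b m) (⁅b, a⁆ ^ m)]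
    rw [← ((central_commute (hC c b) (⁅c, a⁆ ^ m)).pow_right m).eq]
  add_comm a b := by
    show a * b * ⁅b, a⁆ ^ m = b * a * ⁅a, b⁆ ^ m
    have key : ⁅b, a⁆ ^ m * ⁅b, a⁆ ^ m = ⁅b, a⁆ := by
      rw [← pow_add, ← two_mul, hp1]
    have h0 : ⁅b, a⁆ * (a * b) = b * a := by
      rw [commutatorElement_def]
      group
    have hba : b * a = a * b * ⁅b, a⁆ := by
      rw [← h0, mul_assoc]
      exact ((central_commute (hC b a) (a * b)).eq).symm.trans (by rw [mul_assoc])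
    have hm : ⁅b, a⁆ ^ m = ⁅b, a⁆ * (⁅b, a⁆ ^ m)⁻¹ := eq_mul_inv_iff_mul_eq.mpr key
    rw [hba, ← commutatorElement_inv b a, inv_pow]
    conv_lhs => rw [hm]
    simp only [mul_assoc]
  zero_add a := by
    show 1 * a * ⁅a, (1 : G)⁆ ^ m = a
    simp
  add_zero a := by
    show a * 1 * ⁅(1 : G), a⁆ ^ m = a
    simp
  neg_add_cancel a := by
    show a⁻¹ * a * ⁅a, a⁻¹⁆ ^ m = 1
    have h1 : ⁅a, a⁻¹⁆ = 1 := by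
      simp only [commutatorElement_def]
      group
    simp [h1]

end BaerAux

/-- Let `p` be an odd prime and `G` a finite group with `g^p = 1` for all
`g`, `[G,G] = Z(G)`, and `1 < Z(G) < G`.  If `b : V × V → W` is (a realization over `𝔽_p` of)
the commutator bimap `Bi(G)` of `G` — i.e. there are bijections `eV : G/Z(G) ≃ V` and
`eW : Z(G) = [G,G] ≃ W` transporting multiplication to addition and carrying the commutator
map to `b` — then `G` is isomorphic to the Baer group `Grp(b)`. -/
theorem baer_correspondence
    (p : ℕ) [Fact p.Prime] (hp : Odd p) (G : Type) [Group G] [Finite G]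
    (hexp : ∀ g : G, g ^ p = 1)
    (hcz : commutator G = Subgroup.center G)
    (hbot : ⊥ < Subgroup.center G) (htop : Subgroup.center G < ⊤)
    (V W : Type) [AddCommGroup V] [AddCommGroup W]
    [Module (ZMod p) V] [Module (ZMod p) W]
    (b : V →ₗ[ZMod p] V →ₗ[ZMod p] W) (hb : ∀ v : V, b v v = 0)
    (eV : (G ⧸ Subgroup.center G) ≃ V)
    (heV : ∀ x y : G ⧸ Subgroup.center G, eV (x * y) = eV x + eV y)
    (eW : ↥(Subgroup.center G) ≃ W)
    (heW : ∀ x y : ↥(Subgroup.center G), eW (x * y) = eW x + eW y)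
    (hcomm : ∀ g h : G,
      b (eV ↑g) (eV ↑h) =
        eW ⟨⁅g, h⁆, by
          rw [← hcz, commutator_def]
          exact Subgroup.commutator_mem_commutator (Subgroup.mem_top g)
            (Subgroup.mem_top h)⟩) :
    Nonempty (G ≃* BaerGroup b) := by
  classical
  -- membership of commutators in the center
  have hmem : ∀ g h : G, ⁅g, h⁆ ∈ Subgroup.center G := fun g h => by
    rw [← hcz, commutator_def]
    exact Subgroup.commutator_mem_commutator (Subgroup.mem_top g) (Subgroup.mem_top h)
  set m : ℕ := (p + 1) / 2 with hm_def
  have hm2 : 2 * m = p + 1 := by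
    obtain ⟨k, hk⟩ := hp
    omega
  -- additivity basics
  have eW1 : eW 1 = 0 := by
    have h := heW 1 1
    rw [mul_one] at h
    exact (left_eq_add.mp h)
  have eV1 : eV 1 = 0 := by
    have h := heV 1 1
    rw [mul_one] at h
    exact (left_eq_add.mp h)
  have heVg : ∀ g h : G, eV ↑(g * h) = eV ↑g + eV ↑h := fun g h => by
    rw [QuotientGroup.mk_mul]
    exact heV _ _
  -- bilinearity of the commutator, via `eW` and `b`
  have hL : ∀ a c k : G, ⁅a * c, k⁆ = ⁅a, k⁆ * ⁅c, k⁆ := by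
    intro a c k
    have h : eW ⟨⁅a * c, k⁆, hmem _ _⟩ = eW (⟨⁅a, k⁆, hmem _ _⟩ * ⟨⁅c, k⁆, hmem _ _⟩) := by
      rw [heW, ← hcomm, ← hcomm, ← hcomm, heVg, map_add, LinearMap.add_apply]
    have h2 := eW.injective h
    have h3 := congrArg (Subtype.val) h2
    simpa using h3
  have hR : ∀ k a c : G, ⁅k, a * c⁆ = ⁅k, a⁆ * ⁅k, c⁆ := by
    intro k a c
    have h : eW ⟨⁅k, a * c⁆, hmem _ _⟩ = eW (⟨⁅k, a⁆, hmem _ _⟩ * ⟨⁅k, c⁆, hmem _ _⟩) := by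
      rw [heW, ← hcomm, ← hcomm, ← hcomm, heVg, map_add]
    have h2 := eW.injective h
    have h3 := congrArg (Subtype.val) h2
    simpa using h3
  have hp1 : ∀ a c : G, ⁅a, c⁆ ^ (2 * m) = ⁅a, c⁆ := by
    intro a c
    rw [hm2, pow_succ, hexp, one_mul]
  -- install the Baer additive structure on G
  letI : AddCommGroup G := baerAddCommGroup m hmem hL hR hp1
  have hadd : ∀ a c : G, a + c = a * c * ⁅c, a⁆ ^ m := fun _ _ => rfl
  have hzero : (0 : G) = 1 := rfl
  have hnsmul : ∀ (n : ℕ) (a : G), n • a = a ^ n := fun _ _ => rfl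
  have hpt : ∀ a : G, p • a = 0 := by
    intro a
    rw [hnsmul, hexp, ← hzero]
  letI instM : Module (ZMod p) G := AddCommGroup.zmodModule hpt
  clear_value instM
  -- the projection G → V
  have hπadd : ∀ a c : G, eV ↑(a + c) = eV ↑a + eV ↑c := by
    intro a c
    rw [hadd]
    have hz : (↑(⁅c, a⁆ ^ m) : G ⧸ Subgroup.center G) = 1 :=
      (QuotientGroup.eq_one_iff _).mpr (pow_mem (hmem c a) m)
    have : ((a * c * ⁅c, a⁆ ^ m : G) : G ⧸ Subgroup.center G)
        = ((a : G ⧸ Subgroup.center G) * (c : G ⧸ Subgroup.center G)) := by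
      rw [QuotientGroup.mk_mul, QuotientGroup.mk_mul, hz, mul_one]
    rw [this, heV]
  let π₀ : G →+ V := AddMonoidHom.mk' (fun a => eV ↑a) hπadd
  let π : G →ₗ[ZMod p] V := π₀.toZModLinearMap p
  have hπ : ∀ a : G, π a = eV ↑a := fun _ => rfl
  have hrange : LinearMap.range π = ⊤ := by
    rw [LinearMap.range_eq_top]
    intro v
    exact ⟨(eV.symm v).out, by rw [hπ, QuotientGroup.out_eq', Equiv.apply_symm_apply]⟩
  obtain ⟨s, hs⟩ := π.exists_rightInverse_of_surjective hrange
  have hsv : ∀ v : V, eV ↑(s v) = v := by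
    intro v
    have := LinearMap.ext_iff.mp hs v
    simpa [hπ] using this
  have hssum : ∀ u v : V, s (u + v) = s u * s v * ⁅s v, s u⁆ ^ m := by
    intro u v
    rw [map_add, hadd]
  -- `eW` facts
  have heWsymm : ∀ w w' : W, eW.symm (w + w') = eW.symm w * eW.symm w' := by
    intro w w'
    apply eW.injective
    rw [heW, Equiv.apply_symm_apply, Equiv.apply_symm_apply, Equiv.apply_symm_apply]
  have heWpow : ∀ (z : ↥(Subgroup.center G)) (n : ℕ), eW (z ^ n) = n • eW z := by
    intro z n
    induction n with
    | zero => simpa using eW1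
    | succ k ih => rw [pow_succ, heW, ih, succ_nsmul]
  have h2inv : (2⁻¹ : ZMod p) = ((m : ℕ) : ZMod p) := by
    have h2 : (2 : ZMod p) * ((m : ℕ) : ZMod p) = 1 := by
      have : (((2 * m : ℕ) : ZMod p)) = ((p + 1 : ℕ) : ZMod p) := by rw [hm2]
      push_cast at this
      rw [ZMod.natCast_self, zero_add] at this
      simpa using this
    exact inv_eq_of_mul_eq_one_right h2
  have hsmul : ∀ x : W, (2⁻¹ : ZMod p) • x = m • x := by
    intro x
    rw [h2inv, Nat.cast_smul_eq_nsmul]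
  -- the candidate isomorphism
  let f : BaerGroup b → G := fun x => s x.1 * ((eW.symm x.2 : ↥(Subgroup.center G)) : G)
  have hf_proj : ∀ x : BaerGroup b, eV ↑(f x) = x.1 := by
    intro x
    have hz : ((((eW.symm x.2 : ↥(Subgroup.center G)) : G)) : G ⧸ Subgroup.center G) = 1 :=
      (QuotientGroup.eq_one_iff _).mpr (eW.symm x.2).2
    show eV ↑(s x.1 * _) = x.1
    rw [QuotientGroup.mk_mul, hz, mul_one, hsv]
  have hf_mul : ∀ x y : BaerGroup b, f (x * y) = f x * f y := by
    intro x y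
    show s (x.1 + y.1) * ((eW.symm (x.2 + y.2 + (2⁻¹ : ZMod p) • (b x.1 y.1))
        : ↥(Subgroup.center G)) : G)
      = s x.1 * ((eW.symm x.2 : ↥(Subgroup.center G)) : G)
        * (s y.1 * ((eW.symm y.2 : ↥(Subgroup.center G)) : G))
    have hc : ∀ w : W, ∀ g : G, ((eW.symm w : ↥(Subgroup.center G)) : G) * g
        = g * ((eW.symm w : ↥(Subgroup.center G)) : G) :=
      fun w g => ((central_commute (eW.symm w).2 g).eq).symm
    have hsprod : s x.1 * s y.1 = s (x.1 + y.1) * ⁅s x.1, s y.1⁆ ^ m := by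
      rw [hssum, mul_assoc, ← commutatorElement_inv (s y.1) (s x.1), inv_pow,
        mul_inv_cancel, mul_one]
    have hkey : (⟨⁅s x.1, s y.1⁆, hmem _ _⟩ : ↥(Subgroup.center G)) ^ m
        * eW.symm x.2 * eW.symm y.2
        = eW.symm (x.2 + y.2 + (2⁻¹ : ZMod p) • (b x.1 y.1)) := by
      apply eW.injective
      rw [heW, heW, heWpow, Equiv.apply_symm_apply, Equiv.apply_symm_apply,
        Equiv.apply_symm_apply, ← hcomm, hsv, hsv, hsmul]
      abel
    calc s (x.1 + y.1) * ((eW.symm (x.2 + y.2 + (2⁻¹ : ZMod p) • (b x.1 y.1))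
          : ↥(Subgroup.center G)) : G)
        = s (x.1 + y.1) * ((((⟨⁅s x.1, s y.1⁆, hmem _ _⟩ : ↥(Subgroup.center G)) ^ m
            * eW.symm x.2 * eW.symm y.2 : ↥(Subgroup.center G))) : G) := by rw [hkey]
      _ = s (x.1 + y.1) * (⁅s x.1, s y.1⁆ ^ m
            * ((eW.symm x.2 : ↥(Subgroup.center G)) : G)
            * ((eW.symm y.2 : ↥(Subgroup.center G)) : G)) := by
          push_cast
          rfl
      _ = s x.1 * s y.1 * ((eW.symm x.2 : ↥(Subgroup.center G)) : G)
            * ((eW.symm y.2 : ↥(Subgroup.center G)) : G) := by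
          rw [hsprod]
          simp only [mul_assoc]
      _ = s x.1 * ((eW.symm x.2 : ↥(Subgroup.center G)) : G)
            * (s y.1 * ((eW.symm y.2 : ↥(Subgroup.center G)) : G)) := by
          simp only [mul_assoc]
          conv_rhs => rw [central_left_comm (eW.symm x.2).2 (s y.1)
            ((eW.symm y.2 : ↥(Subgroup.center G)) : G)]
  have hf_inj : Function.Injective f := by
    intro x y hxy
    have h1 : x.1 = y.1 := by
      rw [← hf_proj x, ← hf_proj y, hxy]
    have h2 : ((eW.symm x.2 : ↥(Subgroup.center G)) : G)
        = ((eW.symm y.2 : ↥(Subgroup.center G)) : G) := by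
      have : s x.1 * ((eW.symm x.2 : ↥(Subgroup.center G)) : G)
          = s x.1 * ((eW.symm y.2 : ↥(Subgroup.center G)) : G) := by
        have := hxy
        simp only [f] at this
        rw [h1] at this ⊢
        exact this
      exact mul_left_cancel this
    have h3 : eW.symm x.2 = eW.symm y.2 := Subtype.ext h2
    have h4 : x.2 = y.2 := eW.symm.injective h3
    exact Prod.ext h1 h4
  have hf_surj : Function.Surjective f := by
    intro g
    set u : V := eV ↑g with hu
    have hmk : ((s u : G) : G ⧸ Subgroup.center G) = (g : G ⧸ Subgroup.center G) := by
      apply eV.injective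
      rw [hsv]
    have hz : (s u)⁻¹ * g ∈ Subgroup.center G := by
      rw [← QuotientGroup.eq_one_iff, QuotientGroup.mk_mul, QuotientGroup.mk_inv, hmk,
        inv_mul_cancel]
    refine ⟨((u, eW ⟨(s u)⁻¹ * g, hz⟩) : BaerGroup b), ?_⟩
    show s u * ((eW.symm (eW ⟨(s u)⁻¹ * g, hz⟩) : ↥(Subgroup.center G)) : G) = g
    rw [Equiv.symm_apply_apply]
    simp
  let E : BaerGroup b ≃ G := Equiv.ofBijective f ⟨hf_inj, hf_surj⟩
  let φ : BaerGroup b ≃* G := { E with map_mul' := fun x y => hf_mul x y }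
  exact ⟨φ.symm⟩
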